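/- For every n ∈ ℕ, the entropy of the round n-sphere exceeds √2: E(n) = 2√π·(n/(2e))^{n/2}/Γ((n+1)/2) > √2. -/

import Mathlib

open Real Stirling Filter Topology Nat

private lemma stirl_diff_le (n : ℕ) :
    log (stirlingSeq (n + 1)) - log (stirlingSeq (n + 2)) ≤
      1 / (12 * ((n : ℝ) + 1)) - 1 / (12 * ((n : ℝ) + 2)) := by
  have hx : (0:ℝ) < (n:ℝ) + 1 := by positivity
  have ht2nn : (0:ℝ) ≤ ((1 : ℝ) / (2 * ((n:ℝ) + 1) + 1)) ^ 2 := sq_nonneg _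
  have ht2lt : ((1 : ℝ) / (2 * ((n:ℝ) + 1) + 1)) ^ 2 < 1 := by
    rw [div_pow, one_pow, div_lt_one (by positivity)]
    nlinarith [Nat.cast_nonneg (α := ℝ) n]
  have hgeo : HasSum (fun k : ℕ => 1/3 * (((1 : ℝ) / (2 * ((n:ℝ) + 1) + 1)) ^ 2) ^ (k+1))
      (1/3 * ((((1 : ℝ) / (2 * ((n:ℝ) + 1) + 1)) ^ 2) * (1 - ((1 : ℝ) / (2 * ((n:ℝ) + 1) + 1)) ^ 2)⁻¹)) := by
    have h := (hasSum_geometric_of_lt_one ht2nn ht2lt).mul_left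
      (1/3 * (((1 : ℝ) / (2 * ((n:ℝ) + 1) + 1)) ^ 2))
    convert h using 1
    · rfl
    · funext k; ring
    · ring
  have hb : ∀ k : ℕ, (1 : ℝ) / (2 * (↑(k + 1) : ℝ) + 1) * (((1 : ℝ) / (2 * (↑(n + 1) : ℝ) + 1)) ^ 2) ^ (k + 1)
      ≤ 1/3 * (((1 : ℝ) / (2 * ((n:ℝ) + 1) + 1)) ^ 2) ^ (k+1) := by
    intro k
    push_cast
    apply mul_le_mul_of_nonneg_right ?_ (by positivity)
    rw [div_le_div_iff₀ (by positivity) (by norm_num)]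
    have : (0:ℝ) ≤ (k:ℝ) := Nat.cast_nonneg k
    linarith
  have hsum := hasSum_le hb (log_stirlingSeq_diff_hasSum n) hgeo
  refine hsum.trans (le_of_eq ?_)
  have hn : (0:ℝ) ≤ (n:ℝ) := Nat.cast_nonneg n
  have h2 : (2*((n:ℝ)+1)+1) ≠ 0 := by positivity
  have h1 : (1:ℝ) - ((1:ℝ)/(2*((n:ℝ)+1)+1))^2 ≠ 0 := sub_ne_zero.mpr (ne_of_gt ht2lt)
  rw [div_sub_div _ _ (by positivity : (0:ℝ) < 12*((n:ℝ)+1)).ne' (by positivity : (0:ℝ) < 12*((n:ℝ)+2)).ne',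
    eq_div_iff (by positivity : (0:ℝ) < 12*((n:ℝ)+1)*(12*((n:ℝ)+2))).ne']
  field_simp
  have hD : (24 + (n:ℝ)*36 + (n:ℝ)^2*12) ≠ 0 := by positivity
  have hDD : (24 + (n:ℝ)*36 + (n:ℝ)^2*12) * (24 + (n:ℝ)*36 + (n:ℝ)^2*12)⁻¹ = 1 := mul_inv_cancel₀ hD
  rw [div_eq_iff (by have : (0:ℝ) < (2*((n:ℝ)+1)+1)^2 - 1 := by nlinarith
                     exact this.ne')]
  ring

private lemma stirl_telescope (n : ℕ) : ∀ N : ℕ,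
    log (stirlingSeq (n + 1)) - log (stirlingSeq (n + 1 + N)) ≤
      1 / (12 * ((n : ℝ) + 1)) - 1 / (12 * ((n : ℝ) + 1 + N)) := by
  intro N
  induction N with
  | zero => simp
  | succ N ih =>
      have h := stirl_diff_le (n + N)
      have hcast : ((n + N : ℕ) : ℝ) = (n : ℝ) + N := by push_cast; ring
      rw [hcast] at h
      have : n + 1 + (N + 1) = (n + N) + 2 := by ring
      rw [this]
      have h2 : n + 1 + N = (n + N) + 1 := by ring
      rw [h2] at ih
      push_cast
      push_cast at ih h
      ring_nf at ih h ⊢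
      linarith

private lemma stirl_log_le (n : ℕ) :
    log (stirlingSeq (n + 1)) ≤ log (√π) + 1 / (12 * ((n : ℝ) + 1)) := by
  have key : ∀ N : ℕ, log (stirlingSeq (n + 1)) - 1 / (12 * ((n : ℝ) + 1)) ≤
      log (stirlingSeq (n + 1 + N)) := by
    intro N
    have h := stirl_telescope n N
    have hpos : (0:ℝ) < 1 / (12 * ((n : ℝ) + 1 + N)) := by positivity
    linarith
  have hlim : Tendsto (fun N : ℕ => log (stirlingSeq (n + 1 + N))) atTop (𝓝 (log (√π))) := by
    have h2 : Tendsto (fun N : ℕ => n + 1 + N) atTop atTop :=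
      tendsto_atTop_mono (fun N => Nat.le_add_left N (n + 1)) tendsto_id
    exact (tendsto_stirlingSeq_sqrt_pi.comp h2).log (by positivity)
  linarith [ge_of_tendsto' hlim key]

private lemma stirl_strict_lt (n : ℕ) : stirlingSeq (n + 2) < stirlingSeq (n + 1) := by
  have h := le_hasSum (log_stirlingSeq_diff_hasSum n) 0 (fun j _ => by positivity)
  have h0 : (0:ℝ) < 1 / (2 * ((0:ℕ) + 1 : ℕ) + 1) * (((1:ℝ) / (2 * (↑(n + 1) : ℝ) + 1)) ^ 2) ^ (0 + 1) := by
    positivity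
  have hlog : log (stirlingSeq (n + 2)) < log (stirlingSeq (n + 1)) := by
    have := lt_of_lt_of_le h0 h
    linarith
  exact (log_lt_log_iff (stirlingSeq'_pos (n + 1)) (stirlingSeq'_pos n)).mp hlog

private lemma s_lower (m : ℕ) (hm : 1 ≤ m) :
    1 / (12 * (m:ℝ)) < ((m:ℝ) + 1/2) * log (1 + (2 * (m:ℝ))⁻¹) - 1/2 := by
  have hm1 : (1:ℝ) ≤ (m:ℝ) := by exact_mod_cast hm
  have h0 : (0:ℝ) < 2 * (m:ℝ) := by linarith
  have hs := hasSum_log_one_add_inv h0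
  have h1 : (2:ℝ) * (1 / (2 * ((0:ℕ):ℝ) + 1)) * (1 / (2 * (2 * (m:ℝ)) + 1)) ^ (2 * 0 + 1)
      ≤ log (1 + (2 * (m:ℝ))⁻¹) := le_hasSum hs 0 (fun j _ => by positivity)
  have h2 : (2:ℝ) / (4 * (m:ℝ) + 1) ≤ log (1 + (2 * (m:ℝ))⁻¹) := by
    refine le_trans (le_of_eq ?_) h1
    push_cast
    field_simp
    ring
  have h3 : ((m:ℝ) + 1/2) * (2 / (4 * (m:ℝ) + 1)) ≤ ((m:ℝ) + 1/2) * log (1 + (2 * (m:ℝ))⁻¹) :=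
    mul_le_mul_of_nonneg_left h2 (by linarith)
  have h4 : 1 / (12 * (m:ℝ)) < ((m:ℝ) + 1/2) * (2 / (4 * (m:ℝ) + 1)) - 1/2 := by
    rw [mul_div_assoc']
    have e1 : ((m:ℝ) + 1/2) * 2 = 2 * (m:ℝ) + 1 := by ring
    rw [e1]
    rw [div_sub' (by positivity : (4 * (m:ℝ) + 1) ≠ 0)]
    rw [div_lt_div_iff₀ (by positivity) (by positivity)]
    nlinarith
  linarith

private lemma Gamma_half_formula (m : ℕ) :
    Real.Gamma ((m:ℝ) + 1/2) = √π * (2*m) ! / (4^m * m !) := by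
  induction m with
  | zero =>
      rw [show ((0:ℕ):ℝ) + 1/2 = 1/2 by norm_num, Real.Gamma_one_half_eq]
      norm_num
  | succ k ih =>
      have hne : ((k:ℝ) + 1/2) ≠ 0 := by positivity
      have e1 : ((k+1:ℕ):ℝ) + 1/2 = ((k:ℝ) + 1/2) + 1 := by push_cast; ring
      rw [e1, Real.Gamma_add_one hne, ih]
      have e2 : (2*(k+1)) ! = (2*k+2) * ((2*k+1) * (2*k) !) := by
        have : 2*(k+1) = (2*k+1) + 1 := by ring
        rw [this, Nat.factorial_succ, Nat.factorial_succ]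
      rw [e2, Nat.factorial_succ]
      push_cast
      have h4 : (0:ℝ) < 4 ^ k := by positivity
      have hf : (0:ℝ) < (k ! : ℝ) := by exact_mod_cast Nat.factorial_pos k
      field_simp
      ring

private lemma factorial_eq (n : ℕ) (hn : 1 ≤ n) :
    (n ! : ℝ) = stirlingSeq n * (√(2*(n:ℝ)) * ((n:ℝ)/exp 1)^n) := by
  have hn1 : (1:ℝ) ≤ (n:ℝ) := by exact_mod_cast hn
  have hpos : (0:ℝ) < √(2*(n:ℝ)) * ((n:ℝ)/exp 1)^n := by positivity
  rw [stirlingSeq]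
  rw [div_mul_cancel₀]
  exact hpos.ne'

/-- Stone's formula for the entropy of the round `n`-sphere (with `0 ^ 0 = 1`). -/
noncomputable def sphereEntropy (n : ℕ) : ℝ :=
  2 * Real.sqrt Real.pi * ((n : ℝ) / (2 * Real.exp 1)) ^ ((n : ℝ) / 2) /
    Real.Gamma (((n : ℝ) + 1) / 2)

private lemma aux_odd (k : ℕ) : Real.sqrt 2 < sphereEntropy (2*(k+1)+1) := by
  unfold sphereEntropy
  have hGam : Real.Gamma ((((2*(k+1)+1 : ℕ) : ℝ) + 1)/2) = ((k+1) ! : ℝ) := by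
    rw [show (((2*(k+1)+1 : ℕ) : ℝ) + 1)/2 = ((k+1 : ℕ) : ℝ) + 1 by push_cast; ring,
      Real.Gamma_nat_eq_factorial]
  rw [hGam, lt_div_iff₀ (by exact_mod_cast Nat.factorial_pos (k+1))]
  have hSpos : 0 < stirlingSeq (k+1) := stirlingSeq'_pos k
  have hfac0 : (0:ℝ) < ((k+1 : ℕ) : ℝ) := by positivity
  have hbpos : (0:ℝ) < ((2*(k+1)+1 : ℕ) : ℝ) / (2 * exp 1) := by positivity
  refine (log_lt_log_iff (by positivity) (by positivity)).mp ?_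
  rw [factorial_eq (k+1) (by omega)]
  rw [Real.log_mul (by positivity) (mul_pos hSpos (by positivity)).ne',
    Real.log_mul hSpos.ne' (by positivity),
    Real.log_mul (by positivity) (by positivity),
    Real.log_sqrt (by positivity), Real.log_pow,
    Real.log_div (by positivity) (exp_ne_zero 1), Real.log_exp,
    Real.log_mul (by positivity) (by positivity),
    Real.log_mul two_ne_zero (by positivity),
    Real.log_rpow hbpos,
    Real.log_div (by positivity) (by positivity : (2 * exp 1 : ℝ) ≠ 0),
    Real.log_mul two_ne_zero (exp_ne_zero 1), Real.log_exp,
    Real.log_sqrt (by positivity : (0:ℝ) ≤ 2*((k+1:ℕ):ℝ)),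
    Real.log_mul two_ne_zero hfac0.ne']
  have hA := stirl_log_le k
  have hs := s_lower (k+1) (by omega)
  have hL : Real.log (1 + (2*(((k+1):ℕ):ℝ))⁻¹)
      = Real.log ((2*(k+1)+1 : ℕ) : ℝ) - Real.log 2 - Real.log ((k+1 : ℕ) : ℝ) := by
    rw [show (1 + (2*(((k+1):ℕ):ℝ))⁻¹) = ((2*(k+1)+1 : ℕ) : ℝ)/(2*((k+1:ℕ):ℝ)) by
        push_cast; field_simp,
      Real.log_div (by positivity) (by positivity),
      Real.log_mul two_ne_zero hfac0.ne']
    ring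
  rw [hL] at hs
  push_cast at hA hs ⊢
  ring_nf at hA hs ⊢
  linarith

private lemma aux_zero : Real.sqrt 2 < sphereEntropy 0 := by
  unfold sphereEntropy
  rw [show (((0:ℕ):ℝ)+1)/2 = 1/2 by norm_num, Real.Gamma_one_half_eq,
    show ((0:ℕ):ℝ)/2 = 0 by norm_num, Real.rpow_zero, mul_one, mul_div_assoc,
    div_self (by positivity : (√π:ℝ) ≠ 0), mul_one,
    Real.sqrt_lt' (by norm_num : (0:ℝ) < 2)]
  norm_num

private lemma aux_one : Real.sqrt 2 < sphereEntropy 1 := by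
  unfold sphereEntropy
  rw [show (((1:ℕ):ℝ)+1)/2 = 1 by norm_num, Real.Gamma_one, div_one,
    show ((1:ℕ):ℝ)/(2*exp 1) = 1/(2*exp 1) by norm_num,
    show ((1:ℕ):ℝ)/2 = (1/2:ℝ) by norm_num,
    ← Real.sqrt_eq_rpow,
    Real.sqrt_lt' (by positivity : (0:ℝ) < 2*√π*√(1/(2*exp 1)))]
  have h1 : (2*√π*√(1/(2*exp 1)))^2 = 4 * π * (1/(2*exp 1)) := by
    rw [mul_pow, mul_pow, Real.sq_sqrt pi_nonneg, Real.sq_sqrt (by positivity)]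
    ring
  rw [h1]
  have he : exp 1 < 2.7182818286 := Real.exp_one_lt_d9
  have hpi : 3.141592 < π := Real.pi_gt_d6
  have hepos := Real.exp_pos 1
  rw [mul_one_div, lt_div_iff₀ (by positivity)]
  nlinarith

private lemma aux_even (k : ℕ) : Real.sqrt 2 < sphereEntropy (2*(k+1)) := by
  unfold sphereEntropy
  have hfac0 : (0:ℝ) < ((k+1 : ℕ) : ℝ) := by positivity
  have hG : Real.Gamma ((((2*(k+1) : ℕ) : ℝ) + 1)/2)
      = √π * ((2*(k+1)) ! : ℝ) / (4^(k+1) * ((k+1) ! : ℝ)) := by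
    rw [show (((2*(k+1) : ℕ) : ℝ) + 1)/2 = ((k+1:ℕ):ℝ) + 1/2 by push_cast; ring,
      Gamma_half_formula]
  have hf2pos : (0:ℝ) < ((2*(k+1)) ! : ℝ) := by exact_mod_cast Nat.factorial_pos _
  have hf1pos : (0:ℝ) < ((k+1) ! : ℝ) := by exact_mod_cast Nat.factorial_pos _
  have hGpos : 0 < Real.Gamma ((((2*(k+1) : ℕ) : ℝ) + 1)/2) := by
    rw [hG]; positivity
  rw [lt_div_iff₀ hGpos, hG]
  have hX : (((2*(k+1):ℕ):ℝ)/(2*exp 1)) ^ (((2*(k+1):ℕ):ℝ)/2)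
      = (((k+1:ℕ):ℝ)/exp 1)^((k+1:ℕ)) := by
    rw [show ((2*(k+1):ℕ):ℝ)/(2*exp 1) = ((k+1:ℕ):ℝ)/exp 1 by
        push_cast; field_simp,
      show ((2*(k+1):ℕ):ℝ)/2 = ((k+1:ℕ):ℝ) by push_cast; ring,
      Real.rpow_natCast]
  rw [hX, factorial_eq (2*(k+1)) (by omega), factorial_eq (k+1) (by omega)]
  have hstirl : stirlingSeq (2*(k+1)) < stirlingSeq (k+1) := by
    have ha : stirlingSeq (2*(k+1)) ≤ stirlingSeq (k+2) := by
      have h := stirlingSeq'_antitone (show k+1 ≤ 2*k+1 by omega)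
      simpa [Function.comp, show 2*k+1+1 = 2*(k+1) by ring] using h
    exact lt_of_le_of_lt ha (stirl_strict_lt k)
  have h1 : √(2*((2*(k+1):ℕ):ℝ)) = √2 * √(2*((k+1:ℕ):ℝ)) := by
    rw [show (2*((2*(k+1):ℕ):ℝ)) = 2*(2*((k+1:ℕ):ℝ)) by push_cast; ring,
      Real.sqrt_mul (by norm_num : (0:ℝ) ≤ 2) (2*((k+1:ℕ):ℝ))]
  have h2 : (((2*(k+1):ℕ):ℝ)/exp 1)^(2*(k+1)) = 4^(k+1) * ((((k+1:ℕ):ℝ)/exp 1)^(k+1))^2 := by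
    rw [show ((2*(k+1):ℕ):ℝ)/exp 1 = 2*(((k+1:ℕ):ℝ)/exp 1) by push_cast; ring]
    rw [mul_pow]
    rw [show (2:ℝ)^(2*(k+1)) = 4^(k+1) by rw [pow_mul]; norm_num]
    rw [show 2*(k+1) = (k+1)*2 by ring, pow_mul]
  have hSpos : 0 < stirlingSeq (k+1) := stirlingSeq'_pos k
  rw [h1, h2, ← mul_div_assoc,
    div_lt_iff₀ (mul_pos (by positivity : (0:ℝ) < 4^(k+1))
      (mul_pos hSpos (by positivity : (0:ℝ) < √(2*((k+1:ℕ):ℝ)) * (((k+1:ℕ):ℝ)/exp 1)^(k+1))))]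
  have hC : (0:ℝ) < 2*√π*√(2*((k+1:ℕ):ℝ))*4^(k+1)*((((k+1:ℕ):ℝ)/exp 1)^(k+1))^2 := by
    positivity
  have key := mul_lt_mul_of_pos_right hstirl hC
  have h22 : (√(2:ℝ))^2 = 2 := Real.sq_sqrt (by norm_num)
  ring_nf
  ring_nf at key
  rw [h22]
  linarith [key]


theorem sphereEntropy_gt_sqrt_two : ∀ n : ℕ, Real.sqrt 2 < sphereEntropy n := by
  intro n
  obtain ⟨m, rfl | rfl⟩ := Nat.even_or_odd' n
  · rcases m with _ | k
    · exact aux_zero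
    · exact aux_even k
  · rcases m with _ | k
    · exact aux_one
    · exact aux_odd k
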